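/- Let R be a commutative von Neumann regular ring with identity (for every a ∈ R there exists b ∈ R with a = a·b·a). Then every proper ideal of R is a z°-ideal. -/

import Mathlib

open Set

/-- `Pz a` : the intersection of all minimal prime ideals of `R` which contain `a`. -/
def Pz {R : Type*} [CommRing R] (a : R) : Set R :=
  ⋂ P ∈ {P : Ideal R | P ∈ minimalPrimes R ∧ a ∈ P}, (P : Set R)

/-- A proper ideal `I` is a `z°`-ideal if `Pz a ⊆ I` for every `a ∈ I`. -/
def IsZoIdeal {R : Type*} [CommRing R] (I : Ideal R) : Prop :=
  I ≠ ⊤ ∧ ∀ a ∈ I, Pz a ⊆ (I : Set R)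

/-- The zero set `Z(f)` of a continuous function `f`. -/
def ZSet {X F : Type*} [TopologicalSpace X] [TopologicalSpace F] [Zero F]
    (f : C(X, F)) : Set X := {x | f x = 0}

/-- `f` is bounded over `X` (i.e. `f ∈ B(X,F)`). -/
def BddF {X F : Type*} [TopologicalSpace X] [Field F] [LinearOrder F] [IsStrictOrderedRing F] [TopologicalSpace F]
    (f : C(X, F)) : Prop := ∃ l : F, 0 < l ∧ ∀ x, |f x| ≤ l

/-- `X` is completely `F`-regular: Hausdorff, and points can be separated from closed
sets by bounded `F`-valued continuous functions. -/
def CompletelyFRegular (X F : Type*) [TopologicalSpace X] [Field F] [LinearOrder F] [IsStrictOrderedRing F]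
    [TopologicalSpace F] : Prop :=
  T2Space X ∧ ∀ K : Set X, IsClosed K → ∀ x ∉ K, ∃ f : C(X, F),
    BddF f ∧ f x = 0 ∧ ∀ k ∈ K, f k = 1

/-- `A` is an intermediate ring: a subring of `C(X,F)` containing all of `B(X,F)`. -/
def IsIntermediate {X F : Type*} [TopologicalSpace X] [Field F] [LinearOrder F] [IsStrictOrderedRing F]
    [TopologicalSpace F] [OrderTopology F] (A : Subring C(X, F)) : Prop :=
  ∀ f : C(X, F), BddF f → f ∈ A

/-- An ideal of closed sets in `X`: a nonempty family of closed sets, closed under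
finite unions and under passing to closed subsets. -/
def IsIdealOfClosedSets {X : Type*} [TopologicalSpace X] (P : Set (Set X)) : Prop :=
  P.Nonempty ∧ (∀ A ∈ P, IsClosed A) ∧ (∀ A ∈ P, ∀ B ∈ P, A ∪ B ∈ P) ∧
    ∀ C : Set X, IsClosed C → ∀ A ∈ P, C ⊆ A → C ∈ P

/-- `X` is an almost `P_F`-space: every nonempty zero set has nonempty interior. -/
def AlmostPF (X F : Type*) [TopologicalSpace X] [Field F] [LinearOrder F] [IsStrictOrderedRing F]
    [TopologicalSpace F] : Prop :=
  ∀ f : C(X, F), (ZSet f).Nonempty → (interior (ZSet f)).Nonempty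


/-- In a commutative von Neumann regular ring, every proper ideal is a z°-ideal. -/
theorem stmt18 {R : Type*} [CommRing R]
    (hreg : ∀ a : R, ∃ b : R, a = a * b * a)
    (I : Ideal R) (hI : I ≠ ⊤) :
    ∀ a ∈ I, Pz a ⊆ (I : Set R) := by
  intro a ha x hx
  -- Every prime ideal is a minimal prime.
  have hmin : ∀ P : Ideal R, P.IsPrime → P ∈ minimalPrimes R := by
    intro P hP
    refine ⟨⟨hP, bot_le⟩, ?_⟩
    rintro Q ⟨hQ, -⟩ hQP y hy
    obtain ⟨c, hc⟩ := hreg y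
    have h0 : y * (1 - c * y) = 0 := by linear_combination hc
    have : y * (1 - c * y) ∈ Q := by rw [h0]; exact Q.zero_mem
    rcases hQ.mem_or_mem this with h | h
    · exact h
    · exfalso
      have h1 : (1 : R) ∈ P := by
        have : (1 : R) = (1 - c * y) + c * y := by ring
        rw [this]
        exact P.add_mem (hQP h) (P.mul_mem_left c hy)
      exact hP.ne_top (Ideal.eq_top_iff_one P |>.mpr h1)
  -- x lies in the radical of span {a}
  have hrad : x ∈ (Ideal.span {a}).radical := by
    rw [Ideal.radical_eq_sInf, Ideal.mem_sInf]
    rintro J ⟨hJle, hJp⟩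
    have haJ : a ∈ J := hJle (Ideal.subset_span rfl)
    have := mem_iInter₂.mp hx J ⟨hmin J hJp, haJ⟩
    exact this
  obtain ⟨n, hn⟩ := hrad
  -- x = x * (x*c)^n for the quasi-inverse c of x
  obtain ⟨c, hc⟩ := hreg x
  have key : ∀ m : ℕ, x = x * (x * c) ^ m := by
    intro m
    induction m with
    | zero => simp
    | succ k ih =>
      calc x = x * (x * c) ^ k := ih
        _ = (x * (x * c)) * (x * c) ^ k := by rw [show x * (x * c) = x by linear_combination -hc]
        _ = x * (x * c) ^ (k + 1) := by ring
  have hxspan : x ∈ Ideal.span ({a} : Set R) := by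
    have : x = (x * c ^ n) * x ^ n := by
      calc x = x * (x * c) ^ n := key n
        _ = (x * c ^ n) * x ^ n := by ring
    rw [this]
    exact Ideal.mul_mem_left _ _ hn
  have hle : Ideal.span ({a} : Set R) ≤ I := Ideal.span_le.mpr (by simpa using ha)
  exact hle hxspan
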